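/- Let A be a 9-dimensional associative unital algebra over ℚ whose associated Lie algebra A_Lie decomposes as K ⊕ Z, where K is an 8-dimensional simple Lie subalgebra and Z is spanned by the identity of A. Then A is a central simple associative algebra over ℚ. -/

import Mathlib

attribute [local instance 100] LieRing.ofAssociativeRing

open Module LinearMap Set

lemma aux_nilpotent_of_trace_pow_eq_zero
    {F V : Type*} [Field F] [CharZero F] [IsAlgClosed F]
    [AddCommGroup V] [Module F V] [FiniteDimensional F V]
    (f : Module.End F V) (h : ∀ n : ℕ, 0 < n → trace F V (f ^ n) = 0) :
    IsNilpotent f := by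
  classical
  set G : F → Submodule F V := fun μ => f.maxGenEigenspace μ with hGdef
  have hmt : ∀ μ : F, ∀ x ∈ G μ, f x ∈ G μ := fun μ x hx =>
    f.mapsTo_maxGenEigenspace_of_comm rfl μ hx
  have key : ∀ (μ : F) (n : ℕ),
      trace F (G μ) ((f.restrict (hmt μ)) ^ n) = μ ^ n * (finrank F (G μ) : F) := by
    intro μ n
    have hnil : IsNilpotent (f.restrict (hmt μ) - algebraMap F (Module.End F (G μ)) μ) := by
      have h₁ := f.isNilpotent_restrict_maxGenEigenspace_sub_algebraMap μ
      convert h₁ using 1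
      ext x; rfl
    induction n with
    | zero => simp [trace_one]
    | succ n ih =>
      rw [pow_succ, Module.End.mul_eq_comp,
        trace_comp_eq_mul_of_commute_of_isNilpotent μ ((Commute.refl _).pow_left n) hnil, ih]
      ring
  have hds := DirectSum.isInternal_submodule_of_iSupIndep_of_iSup_eq_top
      f.independent_maxGenEigenspace f.iSup_maxGenEigenspace_eq_top
  have hfin : {μ : F | G μ ≠ ⊥}.Finite :=
    WellFoundedGT.finite_ne_bot_of_iSupIndep f.independent_maxGenEigenspace
  have hsum : ∀ n : ℕ, 0 < n →
      ∑ μ ∈ hfin.toFinset, μ ^ n * (finrank F (G μ) : F) = 0 := by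
    intro n hn
    have hmtn : ∀ μ : F, MapsTo (f ^ n) (G μ) (G μ) := fun μ =>
      f.mapsTo_maxGenEigenspace_of_comm ((Commute.refl f).pow_right n) μ
    have h0 := trace_eq_sum_trace_restrict' hds hfin hmtn
    rw [h n hn] at h0
    rw [← h0.symm]
    refine (Finset.sum_congr rfl fun μ _ => ?_).symm
    rw [← key μ n, Module.End.pow_restrict n (hmt μ)]
  -- every eigenvalue is zero
  have hzero : ∀ μ ∈ hfin.toFinset, μ = (0 : F) := by
    by_contra hcon
    push_neg at hcon
    obtain ⟨μ₀, hμ₀, hμ₀ne⟩ := hcon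
    set T : Finset F := hfin.toFinset.filter (· ≠ 0) with hT
    have hsum' : ∀ k : ℕ, ∑ μ ∈ T, μ ^ (k + 1) * (finrank F (G μ) : F) = 0 := by
      intro k
      rw [hT, Finset.sum_filter_of_ne, hsum (k + 1) k.succ_pos]
      intro x _ hx
      contrapose! hx
      simp [hx]
    set m := T.card with hm
    have e : Fin m ≃ {x // x ∈ T} := T.equivFin.symm
    set v : Fin m → F := fun i => (e i : F) with hv
    have hvinj : Function.Injective v := fun i j hij => e.injective (Subtype.ext hij)
    have hvmem : ∀ i, v i ∈ T := fun i => (e i).2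
    have hvne : ∀ i, v i ≠ 0 := fun i => by
      have := hvmem i; rw [hT, Finset.mem_filter] at this; exact this.2
    set M : Matrix (Fin m) (Fin m) F := Matrix.of fun j i => v i ^ ((j : ℕ) + 1) with hM
    have hdet : M.det ≠ 0 := by
      have hMeq : M = (Matrix.vandermonde v).transpose * Matrix.diagonal v := by
        ext j i
        simp [hM, Matrix.mul_apply, Matrix.diagonal, Matrix.vandermonde, pow_succ]
      rw [hMeq, Matrix.det_mul, Matrix.det_transpose, Matrix.det_vandermonde,
        Matrix.det_diagonal]
      refine mul_ne_zero (Finset.prod_ne_zero_iff.mpr fun i _ =>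
        Finset.prod_ne_zero_iff.mpr fun j hj => ?_)
        (Finset.prod_ne_zero_iff.mpr fun i _ => hvne i)
      have hij := Finset.mem_Ioi.mp hj
      exact sub_ne_zero_of_ne fun hc => hij.ne' (hvinj hc)
    have hMv : M.mulVec (fun i => (finrank F (G (v i)) : F)) = 0 := by
      ext j
      have : ∑ i : Fin m, v i ^ ((j : ℕ) + 1) * (finrank F (G (v i)) : F) = 0 := by
        rw [← hsum' (j : ℕ)]
        rw [← Finset.sum_coe_sort T (fun μ => μ ^ ((j : ℕ) + 1) * (finrank F (G μ) : F))]
        exact (Equiv.sum_comp e (fun x : {x // x ∈ T} =>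
          (x : F) ^ ((j : ℕ) + 1) * (finrank F (G (x : F)) : F))).symm ▸ rfl
      simpa [Matrix.mulVec, dotProduct, hM] using this
    have hc0 := Matrix.eq_zero_of_mulVec_eq_zero hdet hMv
    have hμ₀T : μ₀ ∈ T := by rw [hT, Finset.mem_filter]; exact ⟨hμ₀, hμ₀ne⟩
    have : (finrank F (G μ₀) : F) = 0 := by
      have := congrFun hc0 (e.symm ⟨μ₀, hμ₀T⟩)
      simpa [hv] using this
    have hGne : G μ₀ ≠ ⊥ := by simpa using hμ₀
    have : finrank F (G μ₀) = 0 := by exact_mod_cast this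
    rw [Submodule.finrank_eq_zero] at this
    exact hGne this
  -- conclude
  have htop : G 0 = ⊤ := by
    refine eq_top_iff.mpr ?_
    rw [← f.iSup_maxGenEigenspace_eq_top]
    refine iSup_le fun μ => ?_
    rcases eq_or_ne μ 0 with rfl | hμ
    · exact le_rfl
    · have : G μ = ⊥ := by
        by_contra hb
        exact hμ (hzero μ (hfin.mem_toFinset.mpr hb))
      rw [show f.maxGenEigenspace μ = G μ from rfl, this]
      exact bot_le
  refine (LinearMap.charpoly_nilpotent_tfae f).out 2 0 |>.mp fun x => ?_
  have hx : x ∈ G 0 := htop ▸ Submodule.mem_top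
  rw [hGdef] at hx
  rw [Module.End.mem_maxGenEigenspace] at hx
  obtain ⟨k, hk⟩ := hx
  exact ⟨k, by simpa using hk⟩

lemma aux_nilpotent_of_trace_pow_eq_zero'
    {F V : Type*} [Field F] [CharZero F]
    [AddCommGroup V] [Module F V] [FiniteDimensional F V]
    (f : Module.End F V) (h : ∀ n : ℕ, 0 < n → trace F V (f ^ n) = 0) :
    IsNilpotent f := by
  classical
  set F' := AlgebraicClosure F
  set b := Module.finBasis F V with hb
  set M : Matrix _ _ F := LinearMap.toMatrix b b f with hMdef
  have hM : ∀ n : ℕ, 0 < n → (M ^ n).trace = 0 := by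
    intro n hn
    rw [hMdef, LinearMap.toMatrix_pow, ← LinearMap.trace_eq_matrix_trace F b]
    exact h n hn
  set N : Matrix _ _ F' := M.map (algebraMap F F') with hNdef
  have hmappow : ∀ n : ℕ, N ^ n = (M ^ n).map (algebraMap F F') := by
    intro n
    rw [hNdef, ← RingHom.mapMatrix_apply, ← map_pow, RingHom.mapMatrix_apply]
  have hN : ∀ n : ℕ, 0 < n → (N ^ n).trace = 0 := by
    intro n hn
    rw [hmappow n]
    have htr : ((M ^ n).map (algebraMap F F')).trace = algebraMap F F' ((M ^ n).trace) := by
      simp [Matrix.trace, Matrix.map_apply, Matrix.diag, map_sum]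
    rw [htr, hM n hn, map_zero]
  set bb := Pi.basisFun F' (Fin (finrank F V)) with hbb
  set φ : Module.End F' (Fin (finrank F V) → F') := Matrix.toLin bb bb N with hφ
  have hφN : LinearMap.toMatrix bb bb φ = N := LinearMap.toMatrix_toLin bb bb N
  have hφnil : IsNilpotent φ := by
    apply aux_nilpotent_of_trace_pow_eq_zero
    intro n hn
    rw [LinearMap.trace_eq_matrix_trace F' bb, ← LinearMap.toMatrix_pow, hφN]
    exact hN n hn
  obtain ⟨k, hk⟩ := hφnil
  have hNk : N ^ k = 0 := by
    rw [← hφN, LinearMap.toMatrix_pow, hk, LinearEquiv.map_zero]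
  have hMk : M ^ k = 0 := by
    rw [hmappow k] at hNk
    ext i j
    have := congrFun (congrFun hNk i) j
    simpa [Matrix.map_apply] using (algebraMap F F').injective (by simpa using this)
  refine ⟨k, (LinearMap.toMatrix b b).injective ?_⟩
  rw [← LinearMap.toMatrix_pow, LinearEquiv.map_zero, ← hMdef, hMk]

lemma aux_lieIdeal_eq_top {R L : Type*} [CommRing R] [LieRing L] [LieAlgebra R L]
    [LieAlgebra.IsSimple R L] (I : LieIdeal R L) (h : ∀ x y : L, ⁅x, y⁆ ∈ I) : I = ⊤ := by
  rcases LieAlgebra.IsSimple.eq_bot_or_eq_top I with hI | hI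
  · exfalso
    refine LieAlgebra.IsSimple.non_abelian (R := R) (L := L) ⟨fun x y => ?_⟩
    have hxy := h x y
    rw [hI] at hxy
    simpa using hxy
  · exact hI

lemma aux_not_mult_closed {F A : Type*} [Field F] [CharZero F] [Ring A] [Algebra F A]
    (K : LieSubalgebra F A) [FiniteDimensional F ↥K] [LieAlgebra.IsSimple F ↥K]
    (hmul : ∀ x y : A, x ∈ K → y ∈ K → x * y ∈ K) : False := by
  classical
  have hext : ∀ {a b : ↥K}, (a : A) = (b : A) → a = b := fun h => Subtype.ext h
  have hcoeadd : ∀ a b : ↥K, ((a + b : ↥K) : A) = (a : A) + (b : A) := fun a b => rfl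
  have hcoesmul : ∀ (c : F) (a : ↥K), ((c • a : ↥K) : A) = c • (a : A) := fun c a => rfl
  let mulK : ↥K → ↥K → ↥K := fun x y => ⟨(x : A) * y, hmul _ _ x.2 y.2⟩
  let L : ↥K → Module.End F ↥K := fun x =>
    { toFun := fun y => mulK x y
      map_add' := fun y z => hext (by
        show (x : A) * ((y : A) + (z : A)) = (x : A) * y + (x : A) * z
        rw [mul_add])
      map_smul' := fun c y => hext (by
        show (x : A) * (c • (y : A)) = c • ((x : A) * y)
        rw [mul_smul_comm]) }
  let Rr : ↥K → Module.End F ↥K := fun x =>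
    { toFun := fun y => mulK y x
      map_add' := fun y z => hext (by
        show ((y : A) + (z : A)) * x = (y : A) * x + (z : A) * x
        rw [add_mul])
      map_smul' := fun c y => hext (by
        show (c • (y : A)) * x = c • ((y : A) * x)
        rw [smul_mul_assoc]) }
  have hLmul : ∀ x y : ↥K, L (mulK x y) = L x * L y := by
    intro x y; ext z
    show ((x : A) * y) * z = (x : A) * ((y : A) * z)
    rw [mul_assoc]
  have hRmul : ∀ x y : ↥K, Rr (mulK x y) = Rr y * Rr x := by
    intro x y; ext z
    show (z : A) * ((x : A) * y) = ((z : A) * x) * y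
    rw [mul_assoc]
  have hLbrk : ∀ x y : ↥K, L ⁅x, y⁆ = L x * L y - L y * L x := by
    intro x y; ext z
    show ((⁅x, y⁆ : ↥K) : A) * z = (((L x * L y - L y * L x) z : ↥K) : A)
    rw [LieSubalgebra.coe_bracket, Ring.lie_def]
    show ((x : A) * y - (y : A) * x) * z = (x : A) * ((y : A) * z) - (y : A) * ((x : A) * z)
    rw [sub_mul, mul_assoc, mul_assoc]
  have hRbrk : ∀ x y : ↥K, Rr ⁅x, y⁆ = Rr y * Rr x - Rr x * Rr y := by
    intro x y; ext z
    show (z : A) * ((⁅x, y⁆ : ↥K) : A) = (((Rr y * Rr x - Rr x * Rr y) z : ↥K) : A)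
    rw [LieSubalgebra.coe_bracket, Ring.lie_def]
    show (z : A) * ((x : A) * y - (y : A) * x) = ((z : A) * x) * y - ((z : A) * y) * x
    rw [mul_sub, mul_assoc, mul_assoc]
  have hLadd : ∀ x y : ↥K, L (x + y) = L x + L y := by
    intro x y; ext z
    show ((x : A) + (y : A)) * z = (x : A) * z + (y : A) * z
    rw [add_mul]
  have hLsmul : ∀ (c : F) (x : ↥K), L (c • x) = c • L x := by
    intro c x; ext z
    show (c • (x : A)) * z = c • ((x : A) * z)
    rw [smul_mul_assoc]
  have hRadd : ∀ x y : ↥K, Rr (x + y) = Rr x + Rr y := by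
    intro x y; ext z
    show (z : A) * ((x : A) + (y : A)) = (z : A) * x + (z : A) * y
    rw [mul_add]
  have hRsmul : ∀ (c : F) (x : ↥K), Rr (c • x) = c • Rr x := by
    intro c x; ext z
    show (z : A) * (c • (x : A)) = c • ((z : A) * x)
    rw [mul_smul_comm]
  have hL0 : L 0 = 0 := by
    ext z
    show ((0 : ↥K) : A) * z = ((0 : ↥K) : A)
    simp
  have hR0 : Rr 0 = 0 := by
    ext z
    show (z : A) * ((0 : ↥K) : A) = ((0 : ↥K) : A)
    simp
  let T : LieIdeal F ↥K :=
    { carrier := {z : ↥K | LinearMap.trace F ↥K (L z) = 0}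
      add_mem' := fun {a b} ha hb => by
        simp only [Set.mem_setOf_eq] at *
        rw [hLadd, map_add, ha, hb, add_zero]
      zero_mem' := by
        simp only [Set.mem_setOf_eq]
        rw [hL0, map_zero]
      smul_mem' := fun c a ha => by
        simp only [Set.mem_setOf_eq] at *
        rw [hLsmul, map_smul, ha, smul_zero]
      lie_mem := fun {x m} _ => by
        simp only [Set.mem_setOf_eq]
        rw [hLbrk, map_sub, LinearMap.trace_mul_comm, sub_self] }
  have hLtr : ∀ z : ↥K, LinearMap.trace F ↥K (L z) = 0 := by
    intro z
    have hT : T = ⊤ := aux_lieIdeal_eq_top T (fun x y => by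
      show LinearMap.trace F ↥K (L ⁅x, y⁆) = 0
      rw [hLbrk, map_sub, LinearMap.trace_mul_comm, sub_self])
    have hz : z ∈ T := hT ▸ trivial
    exact hz
  let T' : LieIdeal F ↥K :=
    { carrier := {z : ↥K | LinearMap.trace F ↥K (Rr z) = 0}
      add_mem' := fun {a b} ha hb => by
        simp only [Set.mem_setOf_eq] at *
        rw [hRadd, map_add, ha, hb, add_zero]
      zero_mem' := by
        simp only [Set.mem_setOf_eq]
        rw [hR0, map_zero]
      smul_mem' := fun c a ha => by
        simp only [Set.mem_setOf_eq] at *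
        rw [hRsmul, map_smul, ha, smul_zero]
      lie_mem := fun {x m} _ => by
        simp only [Set.mem_setOf_eq]
        rw [hRbrk, map_sub, LinearMap.trace_mul_comm, sub_self] }
  have hRtr : ∀ z : ↥K, LinearMap.trace F ↥K (Rr z) = 0 := by
    intro z
    have hT : T' = ⊤ := aux_lieIdeal_eq_top T' (fun x y => by
      show LinearMap.trace F ↥K (Rr ⁅x, y⁆) = 0
      rw [hRbrk, map_sub, LinearMap.trace_mul_comm, sub_self])
    have hz : z ∈ T' := hT ▸ trivial
    exact hz
  have hLnil : ∀ z : ↥K, IsNilpotent (L z) := by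
    intro z
    apply aux_nilpotent_of_trace_pow_eq_zero'
    intro n hn
    obtain ⟨w, hw⟩ : ∃ w : ↥K, (L z) ^ n = L w := by
      induction n with
      | zero => omega
      | succ k ihk =>
        rcases Nat.eq_zero_or_pos k with rfl | hk'
        · exact ⟨z, by simp⟩
        · obtain ⟨w, hw⟩ := ihk hk'
          exact ⟨mulK w z, by rw [pow_succ, hw, hLmul]⟩
    rw [hw]; exact hLtr w
  have hRnil : ∀ z : ↥K, IsNilpotent (Rr z) := by
    intro z
    apply aux_nilpotent_of_trace_pow_eq_zero'
    intro n hn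
    obtain ⟨w, hw⟩ : ∃ w : ↥K, (Rr z) ^ n = Rr w := by
      induction n with
      | zero => omega
      | succ k ihk =>
        rcases Nat.eq_zero_or_pos k with rfl | hk'
        · exact ⟨z, by simp⟩
        · obtain ⟨w, hw⟩ := ihk hk'
          exact ⟨mulK z w, by rw [pow_succ, hw, hRmul]⟩
    rw [hw]; exact hRtr w
  have had : ∀ z : ↥K, LieAlgebra.ad F ↥K z = L z - Rr z := by
    intro z; ext w
    show ((⁅z, w⁆ : ↥K) : A) = (((L z - Rr z) w : ↥K) : A)
    rw [LieSubalgebra.coe_bracket, Ring.lie_def]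
    rfl
  have hcomm : ∀ z : ↥K, Commute (L z) (Rr z) := by
    intro z; ext w
    show (z : A) * ((w : A) * z) = ((z : A) * w) * z
    rw [mul_assoc]
  have hnilLie : LieRing.IsNilpotent ↥K := by
    rw [LieAlgebra.isNilpotent_iff_forall (R := F)]
    intro z
    rw [had]
    exact (hcomm z).isNilpotent_sub (hLnil z) (hRnil z)
  have hnontriv : Nontrivial ↥K := by
    by_contra hcon
    rw [not_nontrivial_iff_subsingleton] at hcon
    exact LieAlgebra.IsSimple.non_abelian (R := F) (L := ↥K)
      ⟨fun x y => Subsingleton.elim _ _⟩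
  haveI := hnontriv
  haveI := hnilLie
  have hcenter : Nontrivial (LieAlgebra.center F ↥K) :=
    LieAlgebra.non_trivial_center_of_isNilpotent (R := F) (L := ↥K)
  obtain ⟨⟨a, ha⟩, ⟨b, hb⟩, hab⟩ := hcenter
  have hmem : a - b ∈ LieAlgebra.center F ↥K := sub_mem ha hb
  rw [LieAlgebra.center_eq_bot F ↥K, LieSubmodule.mem_bot] at hmem
  exact hab (Subtype.ext (by rw [← sub_eq_zero]; exact hmem))

/-- If `A` is a 9-dimensional associative unital ℚ-algebra whose Lie algebra decomposes
as `K ⊕ Z` with `K` an 8-dimensional simple Lie subalgebra and `Z` spanned by the identity,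
then `A` is central simple over ℚ. -/
theorem central_simple_of_lie_decomposition
    (A : Type*) [Ring A] [Algebra ℚ A]
    (hdim : Module.finrank ℚ A = 9)
    (K : LieSubalgebra ℚ A)
    (hK : Module.finrank ℚ K = 8)
    (hKsimple : LieAlgebra.IsSimple ℚ K)
    (hcompl : IsCompl K.toSubmodule (Submodule.span ℚ {(1 : A)})) :
    (∀ I : TwoSidedIdeal A, I = ⊥ ∨ I = ⊤) ∧
    (∀ z : A, (∀ a : A, z * a = a * z) → ∃ q : ℚ, z = algebraMap ℚ A q) := by
  haveI := hKsimple
  haveI hfinK : FiniteDimensional ℚ ↥K := Module.finite_of_finrank_eq_succ (n := 7) (by rw [hK])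
  have hdecomp : ∀ a : A, ∃ (k : A) (c : ℚ), k ∈ K ∧ a = k + c • 1 := by
    intro a
    have ha : a ∈ K.toSubmodule ⊔ Submodule.span ℚ {(1 : A)} := by
      rw [hcompl.sup_eq_top]; trivial
    obtain ⟨k, hk, z, hz, hkz⟩ := Submodule.mem_sup.mp ha
    obtain ⟨c, hc⟩ := Submodule.mem_span_singleton.mp hz
    exact ⟨k, c, hk, by rw [← hkz, ← hc]⟩
  constructor
  · intro I
    by_cases hbot : I = ⊥
    · exact Or.inl hbot
    right
    have hcomm_mem : ∀ (x i : A), i ∈ I → x * i - i * x ∈ I :=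
      fun x i hi => I.sub_mem (I.mul_mem_left _ _ hi) (I.mul_mem_right _ _ hi)
    have hsmul_mem : ∀ (c : ℚ) (i : A), i ∈ I → c • i ∈ I := by
      intro c i hi
      rw [Algebra.smul_def]
      exact I.mul_mem_left _ _ hi
    have hbrk_eq : ∀ (x : A) (m : A) (c : ℚ),
        x * (m + c • 1) - (m + c • 1) * x = x * m - m * x := by
      intro x m c
      rw [mul_add, add_mul, mul_smul_comm, smul_mul_assoc, mul_one, one_mul]
      abel
    let J : LieIdeal ℚ ↥K :=
      { carrier := {k : ↥K | ∃ c : ℚ, (k : A) + c • 1 ∈ I}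
        add_mem' := by
          rintro a b ⟨c, hc⟩ ⟨d, hd⟩
          refine ⟨c + d, ?_⟩
          have h := I.add_mem hc hd
          have heq : ((a + b : ↥K) : A) + (c + d) • (1 : A) =
              ((a : A) + c • 1) + ((b : A) + d • 1) := by
            show (a : A) + (b : A) + (c + d) • (1 : A) = _
            rw [add_smul]
            exact add_add_add_comm _ _ _ _
          rw [heq]; exact h
        zero_mem' := ⟨0, by
          show ((0 : ↥K) : A) + (0 : ℚ) • 1 ∈ I
          simpa using I.zero_mem⟩
        smul_mem' := by
          rintro c a ⟨d, hd⟩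
          refine ⟨c * d, ?_⟩
          have h := hsmul_mem c _ hd
          have heq : ((c • a : ↥K) : A) + (c * d) • (1 : A) = c • ((a : A) + d • 1) := by
            show c • (a : A) + (c * d) • (1 : A) = _
            rw [smul_add, smul_smul]
          rw [heq]; exact h
        lie_mem := by
          rintro x m ⟨c, hc⟩
          refine ⟨0, ?_⟩
          have h := hcomm_mem (x : A) _ hc
          rw [hbrk_eq] at h
          show ((⁅x, m⁆ : ↥K) : A) + (0 : ℚ) • 1 ∈ I
          rw [zero_smul, add_zero, LieSubalgebra.coe_bracket, Ring.lie_def]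
          exact h }
    rcases hKsimple.eq_bot_or_eq_top J with hJ | hJ
    · -- I is contained in the span of 1, hence contains 1
      obtain ⟨i, hiI, hine⟩ : ∃ i, i ∈ I ∧ i ≠ 0 := by
        by_contra hcon
        push_neg at hcon
        refine hbot (SetLike.ext fun x => ?_)
        rw [TwoSidedIdeal.mem_bot]
        exact ⟨fun h => hcon x h, fun h => h ▸ I.zero_mem⟩
      obtain ⟨k, c, hk, hi⟩ := hdecomp i
      have hkJ : (⟨k, hk⟩ : ↥K) ∈ J := ⟨c, by rw [← hi]; exact hiI⟩
      rw [hJ, LieSubmodule.mem_bot] at hkJ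
      have hk0 : k = 0 := by simpa using congrArg Subtype.val hkJ
      have hic : i = c • 1 := by rw [hi, hk0, zero_add]
      have hc0 : c ≠ 0 := fun h => hine (by rw [hic, h, zero_smul])
      refine I.eq_top ?_
      have h1 := hsmul_mem c⁻¹ i hiI
      rwa [hic, smul_smul, inv_mul_cancel₀ hc0, one_smul] at h1
    · -- K is contained in I
      have hbrk : ∀ x y : ↥K, ((⁅x, y⁆ : ↥K) : A) ∈ I := by
        intro x y
        have hyJ : y ∈ J := hJ ▸ trivial
        obtain ⟨c, hc⟩ := hyJ
        have h := hcomm_mem (x : A) _ hc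
        rw [hbrk_eq] at h
        rw [LieSubalgebra.coe_bracket, Ring.lie_def]
        exact h
      let I' : LieIdeal ℚ ↥K :=
        { carrier := {k : ↥K | (k : A) ∈ I}
          add_mem' := fun {a b} ha hb => I.add_mem ha hb
          zero_mem' := by
            show ((0 : ↥K) : A) ∈ I
            simpa using I.zero_mem
          smul_mem' := fun c a ha => by
            show ((c • a : ↥K) : A) ∈ I
            exact hsmul_mem c _ ha
          lie_mem := fun {x m} hm => by
            show ((⁅x, m⁆ : ↥K) : A) ∈ I
            rw [LieSubalgebra.coe_bracket, Ring.lie_def]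
            exact hcomm_mem (x : A) _ hm }
      have hI' : I' = ⊤ := aux_lieIdeal_eq_top I' hbrk
      have hKI : ∀ x : A, x ∈ K → x ∈ I := by
        intro x hx
        have : (⟨x, hx⟩ : ↥K) ∈ I' := hI' ▸ trivial
        exact this
      by_cases h1 : (1 : A) ∈ I
      · exact I.eq_top h1
      · exfalso
        have hclosed : ∀ x y : A, x ∈ K → y ∈ K → x * y ∈ K := by
          intro x y hx hy
          have hxyI : x * y ∈ I := I.mul_mem_right _ _ (hKI x hx)
          obtain ⟨k, c, hk, he⟩ := hdecomp (x * y)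
          have hcI : c • (1 : A) ∈ I := by
            have := I.sub_mem hxyI (hKI k hk)
            rwa [he, add_sub_cancel_left] at this
          rcases eq_or_ne c 0 with rfl | hc0
          · rw [he, zero_smul, add_zero]; exact hk
          · exact absurd (by
              have h2 := hsmul_mem c⁻¹ _ hcI
              rwa [smul_smul, inv_mul_cancel₀ hc0, one_smul] at h2) h1
        exact aux_not_mult_closed K hclosed
  · intro z hz
    obtain ⟨k, c, hk, he⟩ := hdecomp z
    refine ⟨c, ?_⟩
    have hkc : ∀ a : A, a * k - k * a = 0 := by
      intro a
      have h1 : z * a = a * z := hz a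
      rw [he] at h1
      rw [add_mul, mul_add, mul_smul_comm, smul_mul_assoc, mul_one, one_mul] at h1
      have h2 : k * a = a * k := add_right_cancel h1
      rw [h2, sub_self]
    have hkK : (⟨k, hk⟩ : ↥K) ∈ LieAlgebra.center ℚ ↥K := by
      intro x
      apply Subtype.ext
      show ((⁅x, (⟨k, hk⟩ : ↥K)⁆ : ↥K) : A) = ((0 : ↥K) : A)
      rw [LieSubalgebra.coe_bracket, Ring.lie_def]
      simpa using hkc (x : A)
    rw [LieAlgebra.center_eq_bot ℚ ↥K, LieSubmodule.mem_bot] at hkK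
    have hk0 : k = 0 := by simpa using congrArg Subtype.val hkK
    rw [he, hk0, zero_add, Algebra.algebraMap_eq_smul_one]
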